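/- arXiv:2201.04834 — 4 statements merged into one kernel-verified Lean document; each statement's English description precedes it below -/
import Mathlib

section
/- Let V be a real vector space equipped with two symmetric positive semidefinite bilinear forms a and s; write ‖v‖_a = √(a(v,v)) and ‖v‖_s = √(s(v,v)). Let π : V → V be a linear map and Λ > 0 a real number such that ‖v − π v‖_s² ≤ (1/Λ)·‖v‖_a² for every v ∈ V. Let F : V → ℝ be a linear functional and C ≥ 0 a real number with F(v) ≤ C·‖v‖_s for all v ∈ V. If e ∈ V satisfies π e = 0 and a(e, v) = F(v) for every v ∈ V with π v = 0, then ‖e‖_a ≤ C/√Λ. -/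
/-- Abstract core of the global error estimate for CEM-GMsFEM (Theorem on the
global solution): if `π e = 0` and `a(e, v) = F(v)` for every `v` in the kernel
of `π`, then `‖e‖_a ≤ C / √Λ`. -/
theorem stmt_0 {V : Type*} [AddCommGroup V] [Module ℝ V]
    (a s : V →ₗ[ℝ] V →ₗ[ℝ] ℝ)
    (ha_symm : ∀ u v, a u v = a v u) (ha_nonneg : ∀ v, 0 ≤ a v v)
    (hs_symm : ∀ u v, s u v = s v u) (hs_nonneg : ∀ v, 0 ≤ s v v)
    (π : V →ₗ[ℝ] V) (Λ : ℝ) (hΛ : 0 < Λ)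
    (happrox : ∀ v, s (v - π v) (v - π v) ≤ (1 / Λ) * a v v)
    (F : V →ₗ[ℝ] ℝ) (C : ℝ) (hC : 0 ≤ C)
    (hF : ∀ v, F v ≤ C * Real.sqrt (s v v))
    (e : V) (he : π e = 0)
    (heq : ∀ v, π v = 0 → a e v = F v) :
    Real.sqrt (a e e) ≤ C / Real.sqrt Λ := by
  have hse : s e e ≤ (1 / Λ) * a e e := by
    have := happrox e
    rw [he, sub_zero] at this
    exact this
  have h1 : a e e ≤ C * Real.sqrt (s e e) := (heq e he) ▸ hF e
  have h2 : Real.sqrt (s e e) ≤ Real.sqrt ((1 / Λ) * a e e) :=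
    Real.sqrt_le_sqrt hse
  have h3 : a e e ≤ C * (Real.sqrt (a e e) / Real.sqrt Λ) := by
    calc a e e ≤ C * Real.sqrt (s e e) := h1
    _ ≤ C * Real.sqrt ((1 / Λ) * a e e) := by
        exact mul_le_mul_of_nonneg_left h2 hC
    _ = C * (Real.sqrt (a e e) / Real.sqrt Λ) := by
        rw [Real.sqrt_mul (by positivity), one_div, Real.sqrt_inv]
        ring
  set x := Real.sqrt (a e e) with hx
  have hxnn : 0 ≤ x := Real.sqrt_nonneg _
  have hxsq : x * x = a e e := Real.mul_self_sqrt (ha_nonneg e)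
  rcases eq_or_lt_of_le hxnn with h0 | h0
  · rw [← h0]; positivity
  · have : x * x ≤ (C / Real.sqrt Λ) * x := by
      rw [hxsq]
      calc a e e ≤ C * (x / Real.sqrt Λ) := h3
      _ = (C / Real.sqrt Λ) * x := by ring
    exact le_of_mul_le_mul_right (by linarith [this]) h0
end

section
/- Let V be a real vector space equipped with a symmetric positive definite bilinear form a and a symmetric positive semidefinite bilinear form s, and let π : V → V be a linear map. Let v ∈ V and suppose there exists ψ ∈ V satisfying a(ψ, w) + s(π ψ, π w) = s(π v, π w) for all w ∈ V. If a(v, ψ) = 0, then s(π v, π v) = 0. -/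
/-- Cauchy–Schwarz for a symmetric positive semidefinite bilinear form. -/
lemma cs_aux {V : Type*} [AddCommGroup V] [Module ℝ V]
    (s : V →ₗ[ℝ] V →ₗ[ℝ] ℝ)
    (hs_symm : ∀ u v, s u v = s v u) (hs_nonneg : ∀ v, 0 ≤ s v v)
    (x y : V) : (s x y) ^ 2 ≤ s x x * s y y := by
  have key : ∀ t : ℝ, 0 ≤ s y y * (t * t) + (2 * s x y) * t + s x x := by
    intro t
    have h := hs_nonneg (x + t • y)
    simp only [map_add, map_smul, LinearMap.add_apply, LinearMap.smul_apply,
      smul_eq_mul] at h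
    rw [hs_symm y x] at h
    ring_nf at h ⊢
    linarith
  have hd := discrim_le_zero key
  unfold discrim at hd
  nlinarith

/-- Abstract core of the second assertion of the basic orthogonality lemma for
CEM-GMsFEM: if `v` is `a`-orthogonal to the solution `ψ` of the variational
problem with datum `π v`, then `π v` vanishes in the `s`-seminorm. -/
theorem stmt_2 {V : Type*} [AddCommGroup V] [Module ℝ V]
    (a s : V →ₗ[ℝ] V →ₗ[ℝ] ℝ)
    (ha_symm : ∀ u v, a u v = a v u) (ha_posdef : ∀ v, v ≠ 0 → 0 < a v v)
    (hs_symm : ∀ u v, s u v = s v u) (hs_nonneg : ∀ v, 0 ≤ s v v)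
    (π : V →ₗ[ℝ] V) (v ψ : V)
    (hvar : ∀ w, a ψ w + s (π ψ) (π w) = s (π v) (π w))
    (horth : a v ψ = 0) :
    s (π v) (π v) = 0 := by
  have h1 := hvar v
  have h2 := hvar ψ
  have hψv : a ψ v = 0 := by rw [ha_symm]; exact horth
  -- s(πψ, πv) = s(πv, πv)
  have e1 : s (π ψ) (π v) = s (π v) (π v) := by linarith
  -- s(πψ, πψ) = s(πv, πv) - a ψ ψ
  have e2 : s (π ψ) (π ψ) = s (π v) (π v) - a ψ ψ := by
    have := hs_symm (π v) (π ψ)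
    have := hs_symm (π ψ) (π v)
    linarith
  by_contra hne
  have hX : 0 < s (π v) (π v) := lt_of_le_of_ne (hs_nonneg _) (Ne.symm hne)
  have cs := cs_aux s hs_symm hs_nonneg (π ψ) (π v)
  rw [e1, e2] at cs
  -- X^2 ≤ (X - aψψ) X forces aψψ ≤ 0, hence ψ = 0
  have haψ : a ψ ψ ≤ 0 := by nlinarith
  have hψ0 : ψ = 0 := by
    by_contra h
    exact absurd haψ (not_le.mpr (ha_posdef ψ h))
  rw [hψ0] at e1
  simp at e1
  linarith
end

section
/- Let Λ > 0 and set c_*(Λ) = max_{t ∈ [0, π/2]} (cos t + sin t)(Λ^{-1/2} cos t + sin t) and θ = c_*(Λ)/(c_*(Λ) + 1), so 0 < θ < 1. Let (T_m)_{m≥0}, (x_m)_{m≥1}, (y_m)_{m≥1} be sequences of nonnegative real numbers such that for every m ≥ 1: T_m ≤ (x_m + y_m)(Λ^{-1/2} x_m + y_m) and x_m² + y_m² ≤ T_{m−1} − T_m. Then T_m ≤ θ^m · T_0 for all m ≥ 0. -/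
open Real in
/-- Key pointwise bound: `(x+y)(a x + y) ≤ c (x² + y²)` for `x, y ≥ 0`,
where `c` bounds `(cos t + sin t)(a cos t + sin t)` on `[0, π/2]`. -/
lemma key_bound (a c : ℝ)
    (hub : ∀ t ∈ Set.Icc (0:ℝ) (π / 2),
      (cos t + sin t) * (a * cos t + sin t) ≤ c)
    (x y : ℝ) (hx : 0 ≤ x) (hy : 0 ≤ y) :
    (x + y) * (a * x + y) ≤ c * (x ^ 2 + y ^ 2) := by
  rcases eq_or_lt_of_le (add_nonneg (sq_nonneg x) (sq_nonneg y)) with h0 | h0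
  · have hx0 : x = 0 := by nlinarith [sq_nonneg x, sq_nonneg y]
    have hy0 : y = 0 := by nlinarith [sq_nonneg x, sq_nonneg y]
    simp [hx0, hy0]
  · set r : ℝ := Real.sqrt (x ^ 2 + y ^ 2) with hr
    have hrpos : 0 < r := Real.sqrt_pos.mpr h0
    have hr2 : r ^ 2 = x ^ 2 + y ^ 2 := Real.sq_sqrt h0.le
    have hyr : y / r ∈ Set.Icc (-1 : ℝ) 1 := by
      constructor
      · have : 0 ≤ y / r := by positivity
        linarith
      · rw [div_le_one hrpos]
        nlinarith [sq_nonneg x, hrpos]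
    set t : ℝ := Real.arcsin (y / r) with ht
    have htmem : t ∈ Set.Icc (0:ℝ) (π / 2) := by
      constructor
      · exact Real.arcsin_nonneg.mpr (by positivity)
      · exact Real.arcsin_le_pi_div_two _
    have hsin : sin t = y / r := Real.sin_arcsin hyr.1 hyr.2
    have hcos : cos t = x / r := by
      have h1 : cos t = Real.sqrt (1 - (y / r) ^ 2) := Real.cos_arcsin _
      have h2 : 1 - (y / r) ^ 2 = (x / r) ^ 2 := by
        field_simp
        nlinarith
      rw [h1, h2, Real.sqrt_sq (by positivity)]
    have := hub t htmem
    rw [hsin, hcos] at this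
    have h3 : (x / r + y / r) * (a * (x / r) + y / r) ≤ c := this
    have h4 : (x + y) * (a * x + y) ≤ c * r ^ 2 := by
      have := mul_le_mul_of_nonneg_right h3 (sq_nonneg r)
      have heq : (x / r + y / r) * (a * (x / r) + y / r) * r ^ 2
          = (x + y) * (a * x + y) := by
        field_simp
      linarith [this, heq.symm ▸ this]
    rwa [hr2] at h4

open Real in
/-- Quantitative content of the exponential decay lemma for CEM-GMsFEM basis
functions: with `c_*(Λ)` the maximum of `(cos t + sin t)(Λ^{-1/2} cos t + sin t)`
on `[0, π/2]` and `θ = c_*/(c_*+1)`, one has `0 < θ < 1` and the tail energies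
`T_m` decay like `θ^m T_0`. -/
theorem stmt_3 (Λ : ℝ) (hΛ : 0 < Λ) (c θ : ℝ)
    (hc : IsGreatest
      ((fun t : ℝ => (cos t + sin t) * ((1 / Real.sqrt Λ) * cos t + sin t)) ''
        Set.Icc 0 (π / 2)) c)
    (hθ : θ = c / (c + 1))
    (T x y : ℕ → ℝ)
    (hT : ∀ m, 0 ≤ T m) (hx : ∀ m, 0 ≤ x m) (hy : ∀ m, 0 ≤ y m)
    (hbound : ∀ m, 1 ≤ m →
      T m ≤ (x m + y m) * ((1 / Real.sqrt Λ) * x m + y m))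
    (hannulus : ∀ m, 1 ≤ m → x m ^ 2 + y m ^ 2 ≤ T (m - 1) - T m) :
    (0 < θ ∧ θ < 1) ∧ ∀ m, T m ≤ θ ^ m * T 0 := by
  have hub : ∀ t ∈ Set.Icc (0:ℝ) (π / 2),
      (cos t + sin t) * ((1 / Real.sqrt Λ) * cos t + sin t) ≤ c := by
    intro t ht
    exact hc.2 ⟨t, ht, rfl⟩
  have hcpos : 0 < c := by
    have h0 := hub 0 ⟨le_refl 0, by positivity⟩
    simp at h0
    rw [one_div] at *
    linarith [h0, inv_pos.mpr (Real.sqrt_pos.mpr hΛ)]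
  have hθpos : 0 < θ := by
    rw [hθ]; positivity
  have hθlt : θ < 1 := by
    rw [hθ, div_lt_one (by linarith)]; linarith
  refine ⟨⟨hθpos, hθlt⟩, ?_⟩
  intro m
  induction m with
  | zero => simp
  | succ n ih =>
    have h1 : 1 ≤ n + 1 := Nat.le_add_left 1 n
    have hb := hbound (n + 1) h1
    have ha := hannulus (n + 1) h1
    simp only [Nat.add_sub_cancel] at ha
    have hkey := key_bound (1 / Real.sqrt Λ) c hub (x (n+1)) (y (n+1))
      (hx _) (hy _)
    have h2 : T (n + 1) ≤ c * (T n - T (n + 1)) := by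
      calc T (n + 1) ≤ (x (n+1) + y (n+1)) * ((1 / Real.sqrt Λ) * x (n+1) + y (n+1)) := hb
        _ ≤ c * (x (n+1) ^ 2 + y (n+1) ^ 2) := hkey
        _ ≤ c * (T n - T (n + 1)) := by
            exact mul_le_mul_of_nonneg_left ha hcpos.le
    have h3 : T (n + 1) ≤ θ * T n := by
      rw [hθ]
      rw [div_mul_eq_mul_div, le_div_iff₀ (by linarith)]
      nlinarith
    calc T (n + 1) ≤ θ * T n := h3
      _ ≤ θ * (θ ^ n * T 0) := mul_le_mul_of_nonneg_left ih hθpos.le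
      _ = θ ^ (n + 1) * T 0 := by ring
end

section
/- Let V be a real vector space equipped with two symmetric positive semidefinite bilinear forms a and s, and let π : V → V be a linear map; write ‖v‖_a = √(a(v,v)) and ‖v‖_s = √(s(v,v)). Let C ≥ 0 and suppose w, φ, φ̂ ∈ V satisfy: (i) a(w, v) + s(π w, π v) = s(π φ, π v) for all v ∈ V; (ii) π φ̂ = π φ; (iii) ‖φ̂‖_a ≤ C·‖π φ‖_s. Then ‖π φ‖_s ≤ C·‖w‖_a + ‖π w‖_s. -/
/-- Cauchy–Schwarz for a symmetric positive semidefinite bilinear form. -/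
lemma psd_cauchy_schwarz {V : Type*} [AddCommGroup V] [Module ℝ V]
    (b : V →ₗ[ℝ] V →ₗ[ℝ] ℝ) (hsymm : ∀ u v, b u v = b v u)
    (hnonneg : ∀ v, 0 ≤ b v v) (u v : V) :
    b u v ≤ Real.sqrt (b u u) * Real.sqrt (b v v) := by
  have key : ∀ t : ℝ, 0 ≤ b u u * (t * t) + 2 * b u v * t + b v v := by
    intro t
    have := hnonneg (t • u + v)
    simp only [map_add, map_smul, LinearMap.add_apply, LinearMap.smul_apply,
      smul_eq_mul] at this
    rw [hsymm v u] at this; nlinarith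
  have hd := discrim_le_zero key
  rw [discrim] at hd
  have hsq : (b u v) ^ 2 ≤ (b u u) * (b v v) := by nlinarith
  calc b u v ≤ |b u v| := le_abs_self _
    _ = Real.sqrt ((b u v) ^ 2) := (Real.sqrt_sq_eq_abs _).symm
    _ ≤ Real.sqrt ((b u u) * (b v v)) := Real.sqrt_le_sqrt hsq
    _ = Real.sqrt (b u u) * Real.sqrt (b v v) :=
        Real.sqrt_mul (hnonneg u) _

/-- Key step in the proof of the main a priori error theorem for CEM-GMsFEM:
from `a(w,v) + s(πw,πv) = s(πφ,πv)` for all `v`, together with `π φ̂ = π φ` and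
`‖φ̂‖_a ≤ C ‖πφ‖_s`, one gets `‖πφ‖_s ≤ C ‖w‖_a + ‖πw‖_s`. -/
theorem stmt_10 {V : Type*} [AddCommGroup V] [Module ℝ V]
    (a s : V →ₗ[ℝ] V →ₗ[ℝ] ℝ)
    (ha_symm : ∀ u v, a u v = a v u) (ha_nonneg : ∀ v, 0 ≤ a v v)
    (hs_symm : ∀ u v, s u v = s v u) (hs_nonneg : ∀ v, 0 ≤ s v v)
    (π : V →ₗ[ℝ] V) (C : ℝ) (hC : 0 ≤ C) (w φ φhat : V)
    (hvar : ∀ v, a w v + s (π w) (π v) = s (π φ) (π v))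
    (hproj : π φhat = π φ)
    (hbound : Real.sqrt (a φhat φhat) ≤ C * Real.sqrt (s (π φ) (π φ))) :
    Real.sqrt (s (π φ) (π φ)) ≤
      C * Real.sqrt (a w w) + Real.sqrt (s (π w) (π w)) := by
  set N := Real.sqrt (s (π φ) (π φ)) with hN
  have hNnn : 0 ≤ N := Real.sqrt_nonneg _
  have hvarh := hvar φhat
  rw [hproj] at hvarh
  -- s(πφ,πφ) = N^2
  have hNsq : s (π φ) (π φ) = N ^ 2 := (Real.sq_sqrt (hs_nonneg _)).symm
  -- Cauchy-Schwarz bounds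
  have h1 : a w φhat ≤ Real.sqrt (a w w) * Real.sqrt (a φhat φhat) :=
    psd_cauchy_schwarz a ha_symm ha_nonneg w φhat
  have h2 : s (π w) (π φ) ≤ Real.sqrt (s (π w) (π w)) * N :=
    psd_cauchy_schwarz s hs_symm hs_nonneg (π w) (π φ)
  have hawnn : 0 ≤ Real.sqrt (a w w) := Real.sqrt_nonneg _
  have h1' : a w φhat ≤ Real.sqrt (a w w) * (C * N) :=
    h1.trans (by
      exact mul_le_mul_of_nonneg_left hbound hawnn)
  have hmain : N ^ 2 ≤ (C * Real.sqrt (a w w) + Real.sqrt (s (π w) (π w))) * N := by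
    nlinarith
  rcases eq_or_lt_of_le hNnn with h0 | hpos
  · rw [← h0]
    positivity
  · exact le_of_mul_le_mul_right (by nlinarith) hpos
end
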